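/- Let P ⊂ ℝ² be a lattice polygon with e_□(P) = l. If min(Δ_P(x), Δ_P(y)) ≤ l−1 and min(Δ_P(x+y), Δ_P(x−y)) ≤ l−1, then there exists a 2×2 integer matrix A with det A = ±1 such that e_□(AP) ≤ l−1; in particular ls_□(P) ≤ l−1. -/
import Mathlib


/-- The lattice polygon determined by a nonempty finite set `V` of lattice points:
the convex hull in `ℝ²` of the corresponding real points. -/
def latticePoly2 (V : Finset (Fin 2 → ℤ)) : Set (Fin 2 → ℝ) :=
  convexHull ℝ ((fun v : Fin 2 → ℤ => fun i => (v i : ℝ)) '' (V : Set (Fin 2 → ℤ)))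

/-- `Δ_P(a₀·x + a₁·y) = w_a(P)`, the lattice width of `P ⊆ ℝ²` in the direction `a ∈ ℤ²`:
the sup minus the inf of the linear form `p ↦ a·p` over `P`. -/
noncomputable def width2 (P : Set (Fin 2 → ℝ)) (a : Fin 2 → ℤ) : ℝ :=
  sSup ((fun p => ∑ i, (a i : ℝ) * p i) '' P) - sInf ((fun p => ∑ i, (a i : ℝ) * p i) '' P)

/-- `T(P) ⊆ [0,l]²` for some affine unimodular transformation `T : p ↦ A·p + v`. -/
def FitsInSquare (P : Set (Fin 2 → ℝ)) (l : ℤ) : Prop :=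
  ∃ (A : Matrix (Fin 2) (Fin 2) ℤ) (v : Fin 2 → ℤ),
    (A.det = 1 ∨ A.det = -1) ∧
    ∀ p ∈ P, ∀ i, ((A.map (fun z : ℤ => (z : ℝ))).mulVec p + fun j => (v j : ℝ)) i ∈
      Set.Icc (0 : ℝ) (l : ℝ)

/-- The set of lattice widths of `P` in all primitive directions `a ∈ ℤ²`. -/
def widthSet2 (P : Set (Fin 2 → ℝ)) : Set ℝ :=
  {w | ∃ a : Fin 2 → ℤ, Int.gcd (a 0) (a 1) = 1 ∧ width2 P a = w}

/-- `T(P) ⊆ [0,a] × [0,b]` for some affine unimodular transformation `T : p ↦ A·p + v`. -/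
def FitsInRect (P : Set (Fin 2 → ℝ)) (a b : ℤ) : Prop :=
  ∃ (A : Matrix (Fin 2) (Fin 2) ℤ) (v : Fin 2 → ℤ),
    (A.det = 1 ∨ A.det = -1) ∧
    ∀ p ∈ P, ((A.map (fun z : ℤ => (z : ℝ))).mulVec p + fun j => (v j : ℝ)) 0 ∈
        Set.Icc (0 : ℝ) (a : ℝ) ∧
      ((A.map (fun z : ℤ => (z : ℝ))).mulVec p + fun j => (v j : ℝ)) 1 ∈
        Set.Icc (0 : ℝ) (b : ℝ)

noncomputable def lf2 (a : Fin 2 → ℤ) : (Fin 2 → ℝ) →ₗ[ℝ] ℝ where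
  toFun p := ∑ i, (a i : ℝ) * p i
  map_add' p q := by simp [mul_add, Finset.sum_add_distrib]
  map_smul' r p := by
    simp only [smul_eq_mul, RingHom.id_apply, Finset.mul_sum, Pi.smul_apply]
    exact Finset.sum_congr rfl fun i _ => by ring

def wset (V : Finset (Fin 2 → ℤ)) (a : Fin 2 → ℤ) : Finset ℤ :=
  V.image (fun v => ∑ i, a i * v i)

lemma wset_ne (V : Finset (Fin 2 → ℤ)) (hV : V.Nonempty) (a : Fin 2 → ℤ) :
    (wset V a).Nonempty := hV.image _

lemma lf2_cast (a v : Fin 2 → ℤ) :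
    lf2 a (fun i => (v i : ℝ)) = ((∑ i, a i * v i : ℤ) : ℝ) := by
  simp [lf2]

lemma mem_P_bounds (V : Finset (Fin 2 → ℤ)) (hV : V.Nonempty) (a : Fin 2 → ℤ)
    (p : Fin 2 → ℝ) (hp : p ∈ latticePoly2 V) :
    (((wset V a).min' (wset_ne V hV a) : ℤ) : ℝ) ≤ ∑ i, (a i : ℝ) * p i ∧
      ∑ i, (a i : ℝ) * p i ≤ (((wset V a).max' (wset_ne V hV a) : ℤ) : ℝ) := by
  have h : latticePoly2 V ⊆ lf2 a ⁻¹' Set.Icc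
      (((wset V a).min' (wset_ne V hV a) : ℤ) : ℝ) (((wset V a).max' (wset_ne V hV a) : ℤ) : ℝ) := by
    apply convexHull_min ?_ ((convex_Icc _ _).linear_preimage (lf2 a))
    rintro _ ⟨v, hv, rfl⟩
    rw [Set.mem_preimage, lf2_cast]
    have hm : ∑ i, a i * v i ∈ wset V a := Finset.mem_image_of_mem _ hv
    exact ⟨by exact_mod_cast Finset.min'_le _ _ hm, by exact_mod_cast Finset.le_max' _ _ hm⟩
  exact h hp

lemma exists_attain_max (V : Finset (Fin 2 → ℤ)) (hV : V.Nonempty) (a : Fin 2 → ℤ) :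
    ∃ p ∈ latticePoly2 V,
      ∑ i, (a i : ℝ) * p i = (((wset V a).max' (wset_ne V hV a) : ℤ) : ℝ) := by
  obtain ⟨v, hv, hval⟩ := Finset.mem_image.mp ((wset V a).max'_mem (wset_ne V hV a))
  refine ⟨fun i => (v i : ℝ), subset_convexHull ℝ _ ⟨v, hv, rfl⟩, ?_⟩
  rw [← hval]; push_cast; rfl

lemma exists_attain_min (V : Finset (Fin 2 → ℤ)) (hV : V.Nonempty) (a : Fin 2 → ℤ) :
    ∃ p ∈ latticePoly2 V,
      ∑ i, (a i : ℝ) * p i = (((wset V a).min' (wset_ne V hV a) : ℤ) : ℝ) := by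
  obtain ⟨v, hv, hval⟩ := Finset.mem_image.mp ((wset V a).min'_mem (wset_ne V hV a))
  refine ⟨fun i => (v i : ℝ), subset_convexHull ℝ _ ⟨v, hv, rfl⟩, ?_⟩
  rw [← hval]; push_cast; rfl

lemma width2_eq (V : Finset (Fin 2 → ℤ)) (hV : V.Nonempty) (a : Fin 2 → ℤ) :
    width2 (latticePoly2 V) a =
      (((wset V a).max' (wset_ne V hV a) : ℤ) : ℝ) -
        (((wset V a).min' (wset_ne V hV a) : ℤ) : ℝ) := by
  set M := (((wset V a).max' (wset_ne V hV a) : ℤ) : ℝ)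
  set m := (((wset V a).min' (wset_ne V hV a) : ℤ) : ℝ)
  set S := (fun p => ∑ i, (a i : ℝ) * p i) '' latticePoly2 V with hS
  have hMS : M ∈ S := by
    obtain ⟨p, hp, hpv⟩ := exists_attain_max V hV a
    exact ⟨p, hp, hpv⟩
  have hmS : m ∈ S := by
    obtain ⟨p, hp, hpv⟩ := exists_attain_min V hV a
    exact ⟨p, hp, hpv⟩
  have hub : ∀ x ∈ S, x ≤ M := by
    rintro _ ⟨p, hp, rfl⟩; exact (mem_P_bounds V hV a p hp).2
  have hlb : ∀ x ∈ S, m ≤ x := by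
    rintro _ ⟨p, hp, rfl⟩; exact (mem_P_bounds V hV a p hp).1
  have h1 : sSup S = M := le_antisymm (csSup_le ⟨M, hMS⟩ hub) (le_csSup ⟨M, hub⟩ hMS)
  have h2 : sInf S = m := le_antisymm (csInf_le ⟨m, hlb⟩ hmS) (le_csInf ⟨m, hmS⟩ hlb)
  rw [width2, ← hS, h1, h2]

lemma width2_image (A : Matrix (Fin 2) (Fin 2) ℤ) (P : Set (Fin 2 → ℝ)) (a : Fin 2 → ℤ) :
    width2 ((fun p => (A.map (fun z : ℤ => (z : ℝ))).mulVec p) '' P) a =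
      width2 P (A.transpose.mulVec a) := by
  unfold width2
  rw [Set.image_image]
  congr 2 <;>
  · apply congrArg (· '' P) ; funext p
    simp only [Matrix.mulVec, dotProduct, Matrix.map_apply, Matrix.transpose_apply,
      Fin.sum_univ_two]
    push_cast
    ring

lemma master (V : Finset (Fin 2 → ℤ)) (hV : V.Nonempty) (l : ℤ)
    (b c : Fin 2 → ℤ) (hdet : b 0 * c 1 - b 1 * c 0 = 1 ∨ b 0 * c 1 - b 1 * c 0 = -1)
    (hb : width2 (latticePoly2 V) b ≤ (l : ℝ) - 1)
    (hc : width2 (latticePoly2 V) c ≤ (l : ℝ) - 1) :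
    (∃ A : Matrix (Fin 2) (Fin 2) ℤ, (A.det = 1 ∨ A.det = -1) ∧
      max (width2 ((fun p => (A.map (fun z : ℤ => (z : ℝ))).mulVec p) '' (latticePoly2 V)) ![1, 0])
        (width2 ((fun p => (A.map (fun z : ℤ => (z : ℝ))).mulVec p) '' (latticePoly2 V)) ![0, 1]) ≤
          (l : ℝ) - 1) ∧
    FitsInSquare (latticePoly2 V) (l - 1) := by
  set A : Matrix (Fin 2) (Fin 2) ℤ := Matrix.of ![b, c] with hA
  have hdet' : A.det = 1 ∨ A.det = -1 := by
    rw [Matrix.det_fin_two]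
    simpa [hA] using hdet
  have hdir1 : A.transpose.mulVec ![1, 0] = b := by
    funext j
    simp [hA, Matrix.mulVec, dotProduct, Fin.sum_univ_two]
  have hdir2 : A.transpose.mulVec ![0, 1] = c := by
    funext j
    simp [hA, Matrix.mulVec, dotProduct, Fin.sum_univ_two]
  constructor
  · refine ⟨A, hdet', ?_⟩
    rw [width2_image, width2_image, hdir1, hdir2]
    exact max_le hb hc
  · refine ⟨A, ![-((wset V b).min' (wset_ne V hV b)), -((wset V c).min' (wset_ne V hV c))],
      hdet', ?_⟩
    intro p hp i
    rw [width2_eq V hV b] at hb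
    rw [width2_eq V hV c] at hc
    have hb2 := mem_P_bounds V hV b p hp
    have hc2 := mem_P_bounds V hV c p hp
    rw [Fin.sum_univ_two] at hb2 hc2
    fin_cases i <;>
    · simp only [hA, Fin.mk_zero, Fin.mk_one, Pi.add_apply, Matrix.mulVec, dotProduct, Fin.sum_univ_two,
        Matrix.map_apply, Matrix.of_apply, Matrix.cons_val', Matrix.cons_val_zero,
        Matrix.cons_val_one, Matrix.head_cons, Matrix.vecHead, Matrix.empty_val', Matrix.cons_val_fin_one,
        Fin.isValue, Set.mem_Icc, Int.cast_neg, Int.cast_sub, Int.cast_one]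
      constructor <;> linarith


/-- If `e_□(P) = l`, `min(Δ_P(x), Δ_P(y)) ≤ l−1` and `min(Δ_P(x+y), Δ_P(x−y)) ≤ l−1`,
then there is a unimodular `A` with `e_□(AP) ≤ l−1`; in particular `ls_□(P) ≤ l−1`. -/
theorem exists_unimodular_reducing (V : Finset (Fin 2 → ℤ)) (hV : V.Nonempty)
    (P : Set (Fin 2 → ℝ)) (hP : P = latticePoly2 V) (l : ℤ)
    (he : max (width2 P ![1, 0]) (width2 P ![0, 1]) = (l : ℝ))
    (h1 : min (width2 P ![1, 0]) (width2 P ![0, 1]) ≤ (l : ℝ) - 1)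
    (h2 : min (width2 P ![1, 1]) (width2 P ![1, -1]) ≤ (l : ℝ) - 1) :
    (∃ A : Matrix (Fin 2) (Fin 2) ℤ, (A.det = 1 ∨ A.det = -1) ∧
      max (width2 ((fun p => (A.map (fun z : ℤ => (z : ℝ))).mulVec p) '' P) ![1, 0])
        (width2 ((fun p => (A.map (fun z : ℤ => (z : ℝ))).mulVec p) '' P) ![0, 1]) ≤
          (l : ℝ) - 1) ∧
    FitsInSquare P (l - 1) := by
  subst hP
  rcases min_le_iff.mp h1 with hx | hy <;> rcases min_le_iff.mp h2 with hp1 | hm1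
  · exact master V hV l ![1, 0] ![1, 1] (by decide) hx hp1
  · exact master V hV l ![1, 0] ![1, -1] (by decide) hx hm1
  · exact master V hV l ![0, 1] ![1, 1] (by decide) hy hp1
  · exact master V hV l ![0, 1] ![1, -1] (by decide) hy hm1
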